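/- Let p be a prime. Every element a of U_{ℤ_p}^{(n)} = {a ∈ (ℤ/pℤ)^n : a[0] = 1} different from the identity (1,0,...,0) has order p in the group (U_{ℤ_p}^{(n)}, ⋆), where ⋆ is the (truncated) binomial convolution product. Consequently (U_{ℤ_p}^{(n)}, ⋆) is an elementary abelian p-group of order p^{n-1}, isomorphic to ((ℤ/pℤ)^{n-1}, +). -/

import Mathlib

/-- Extend a finite sequence by zeros. -/
def ext {R : Type*} [CommRing R] {n : ℕ} (a : Fin n → R) : ℕ → R :=
  fun i => if h : i < n then a ⟨i, h⟩ else 0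

/-- The truncated binomial convolution product on sequences of length `n`. -/
def tmul {R : Type*} [CommRing R] {n : ℕ} (a b : Fin n → R) : Fin n → R :=
  fun m => ∑ h ∈ Finset.range (m.1 + 1), (m.1.choose h : R) * ext a h * ext b (m.1 - h)

/-- The identity `(1,0,...,0)` for the truncated binomial convolution. -/
def tone {R : Type*} [CommRing R] {n : ℕ} : Fin n → R := fun m => if m.1 = 0 then 1 else 0

/-- `k`-th power with respect to the truncated binomial convolution. -/
def tpow {R : Type*} [CommRing R] {n : ℕ} (a : Fin n → R) (k : ℕ) : Fin n → R :=
  (fun b => tmul a b)^[k] tone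

namespace TH
variable {R : Type*} [CommRing R]

/-- Binomial convolution on full (infinite) sequences. -/
def hmul (x y : ℕ → R) : ℕ → R :=
  fun m => ∑ h ∈ Finset.range (m + 1), (m.choose h : R) * x h * y (m - h)

/-- The identity sequence. -/
def hone : ℕ → R := fun m => if m = 0 then 1 else 0

/-- Powers for the binomial convolution. -/
def hpow (x : ℕ → R) (k : ℕ) : ℕ → R := (hmul x)^[k] hone

/-- The shift derivation. -/
def D (x : ℕ → R) : ℕ → R := fun m => x (m + 1)

lemma hmul_comm (x y : ℕ → R) : hmul x y = hmul y x := by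
  funext m
  unfold hmul
  rw [← Finset.sum_range_reflect]
  refine Finset.sum_congr rfl fun h hh => ?_
  have h1 : h ≤ m := Nat.lt_succ_iff.mp (Finset.mem_range.mp hh)
  have e1 : m + 1 - 1 - h = m - h := by omega
  rw [e1, Nat.choose_symm h1, Nat.sub_sub_self h1]
  ring

lemma hmul_hone (x : ℕ → R) : hmul x hone = x := by
  funext m
  unfold hmul hone
  rw [Finset.sum_eq_single_of_mem m (Finset.self_mem_range_succ m)]
  · simp
  · intro h hh hne
    have : m - h ≠ 0 := by
      have := Finset.mem_range.mp hh; omega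
    simp [this]

lemma hone_hmul (x : ℕ → R) : hmul hone x = x := by
  rw [hmul_comm, hmul_hone]

lemma hmul_zero_coeff (x y : ℕ → R) : hmul x y 0 = x 0 * y 0 := by
  simp [hmul]

lemma hmul_assoc (x y z : ℕ → R) : hmul (hmul x y) z = hmul x (hmul y z) := by
  funext m
  unfold hmul
  simp only [Finset.sum_mul, Finset.mul_sum]
  rw [Finset.sum_sigma', Finset.sum_sigma']
  refine Finset.sum_nbij' (fun q => ⟨q.2, q.1 - q.2⟩) (fun q => ⟨q.1 + q.2, q.1⟩)
    ?_ ?_ ?_ ?_ ?_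
  · rintro ⟨l, h⟩ hq
    simp only [Finset.mem_sigma, Finset.mem_range] at hq ⊢
    omega
  · rintro ⟨h, j⟩ hq
    simp only [Finset.mem_sigma, Finset.mem_range] at hq ⊢
    omega
  · rintro ⟨l, h⟩ hq
    simp only [Finset.mem_sigma, Finset.mem_range] at hq
    have : h ≤ l := by omega
    simp [Nat.add_sub_cancel' this]
  · rintro ⟨h, j⟩ hq
    simp [Nat.add_sub_cancel_left]
  · rintro ⟨l, h⟩ hq
    simp only [Finset.mem_sigma, Finset.mem_range] at hq
    have h1 : h ≤ l := by omega
    have h2 : l ≤ m := by omega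
    have e1 : m - h - (l - h) = m - l := by omega
    have key : (m.choose l : R) * l.choose h = (m.choose h : R) * (m - h).choose (l - h) := by
      have := Nat.choose_mul (n := m) h1
      exact_mod_cast congrArg (fun t : ℕ => (t : R)) this
    simp only [e1]
    calc (m.choose l : R) * ((l.choose h : R) * x h * y (l - h)) * z (m - l)
        = ((m.choose l : R) * (l.choose h : R)) * (x h * y (l - h) * z (m - l)) := by ring
      _ = ((m.choose h : R) * ((m - h).choose (l - h) : R)) * (x h * y (l - h) * z (m - l)) := by
          rw [← Nat.cast_mul, ← Nat.cast_mul, Nat.choose_mul (n := m) h1]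
      _ = (m.choose h : R) * x h * (((m - h).choose (l - h) : R) * y (l - h) * z (m - l)) := by
          ring

lemma D_hmul (x y : ℕ → R) : D (hmul x y) = hmul (D x) y + hmul x (D y) := by
  funext m
  show hmul x y (m+1) = hmul (D x) y m + hmul x (D y) m
  unfold hmul D
  rw [Finset.sum_range_succ' (fun h => ((m+1).choose h : R) * x h * y (m + 1 - h))]
  have e1 : ∀ h, h ∈ Finset.range (m+1) →
      ((m+1).choose (h+1) : R) * x (h+1) * y (m + 1 - (h+1)) =
      (m.choose h : R) * x (h+1) * y (m - h) + (m.choose (h+1) : R) * x (h+1) * y (m - h) := by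
    intro h _
    have : m + 1 - (h + 1) = m - h := by omega
    rw [this, Nat.choose_succ_succ]
    push_cast
    ring
  rw [Finset.sum_congr rfl e1, Finset.sum_add_distrib]
  have e2 : ∑ h ∈ Finset.range (m+1), (m.choose h : R) * x (h+1) * y (m - h) =
      ∑ h ∈ Finset.range (m + 1), (m.choose h : R) * x (h + 1) * y (m - h) := rfl
  -- second piece + boundary = hmul x (D y) m
  have e3 : (∑ h ∈ Finset.range (m+1), (m.choose (h+1) : R) * x (h+1) * y (m - h))
      + ((m+1).choose 0 : R) * x 0 * y (m + 1 - 0)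
      = ∑ h ∈ Finset.range (m+1), (m.choose h : R) * x h * y (m - h + 1) := by
    rw [Finset.sum_range_succ (fun h => (m.choose (h+1) : R) * x (h+1) * y (m - h))]
    rw [Finset.sum_range_succ' (fun h => (m.choose h : R) * x h * y (m - h + 1))]
    simp only [Nat.choose_self, Nat.choose_succ_self, Nat.cast_zero, Nat.cast_one,
      Nat.choose_zero_right, Nat.sub_zero, zero_mul, add_zero, one_mul]
    have e4 : ∀ h ∈ Finset.range m, (m.choose (h+1) : R) * x (h+1) * y (m - h) =
        (m.choose (h+1) : R) * x (h+1) * y (m - (h+1) + 1) := by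
      intro h hh
      have : m - h = m - (h+1) + 1 := by
        have := Finset.mem_range.mp hh; omega
      rw [this]
    rw [Finset.sum_congr rfl e4]
  rw [← e3]
  ring

lemma hmul_nsmul (x y : ℕ → R) (k : ℕ) : hmul x (k • y) = k • hmul x y := by
  funext m
  simp only [hmul, Pi.smul_apply, Finset.smul_sum, smul_eq_mul]
  refine Finset.sum_congr rfl fun h _ => ?_
  rw [nsmul_eq_mul, nsmul_eq_mul]
  ring

lemma hmul_zero (x : ℕ → R) : hmul x 0 = 0 := by
  funext m; simp [hmul]

lemma D_hone : D (hone : ℕ → R) = 0 := by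
  funext m; simp [D, hone]

lemma hpow_succ (x : ℕ → R) (k : ℕ) : hpow x (k+1) = hmul x (hpow x k) :=
  Function.iterate_succ_apply' _ _ _

lemma hpow_zero_coeff (x : ℕ → R) (k : ℕ) : hpow x k 0 = x 0 ^ k := by
  induction k with
  | zero => simp [hpow, hone]
  | succ k ih =>
    rw [hpow_succ]
    show hmul x (hpow x k) 0 = _
    simp [hmul, ih, pow_succ]
    ring

lemma D_hpow (x : ℕ → R) : ∀ k : ℕ, D (hpow x (k+1)) = (k+1) • hmul (hpow x k) (D x) := by
  intro k
  induction k with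
  | zero =>
    rw [hpow_succ]
    rw [D_hmul]
    show hmul (D x) (hpow x 0) + hmul x (D (hpow x 0)) = _
    have h0 : (hpow x 0 : ℕ → R) = hone := rfl
    rw [h0, D_hone, hmul_zero, hmul_hone, add_zero, zero_add, one_smul, hone_hmul]
  | succ k ih =>
    rw [hpow_succ, D_hmul, ih, hmul_nsmul, ← hmul_assoc, ← hpow_succ,
      hmul_comm (D x) _, succ_nsmul, succ_nsmul]
    funext m
    simp only [Pi.add_apply, Pi.smul_apply, nsmul_eq_mul, Pi.mul_apply, Pi.natCast_apply, Pi.one_apply, Pi.ofNat_apply]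
    push_cast
    ring

lemma hpow_p (p : ℕ) [Fact p.Prime] (x : ℕ → ZMod p) (hx : x 0 = 1) :
    hpow x p = hone := by
  have hp : 0 < p := (Fact.out : p.Prime).pos
  obtain ⟨q, rfl⟩ : ∃ q, p = q + 1 := ⟨p - 1, by omega⟩
  have hD : D (hpow x (q+1)) = 0 := by
    rw [D_hpow]
    funext m
    show (q+1) • (hmul (hpow x q) (D x) m) = (0 : ZMod (q+1))
    rw [nsmul_eq_mul]
    push_cast
    have hz : ((q : ZMod (q+1)) + 1) = 0 := by
      have := ZMod.natCast_self (q+1); push_cast at this; exact this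
    rw [hz, zero_mul]
  funext m
  cases m with
  | zero => rw [hpow_zero_coeff, hx, one_pow]; rfl
  | succ k =>
    have : hpow x (q+1) (k+1) = D (hpow x (q+1)) k := rfl
    rw [this, hD]
    simp [hone]
variable {n : ℕ}

def proj (n : ℕ) (x : ℕ → R) : Fin n → R := fun m => x m.1

lemma tmul_eq (a b : Fin n → R) : tmul a b = proj n (hmul (ext a) (ext b)) := rfl

lemma proj_hone : (proj n (hone : ℕ → R)) = tone := rfl

lemma proj_ext (a : Fin n → R) : proj n (ext a) = a := by
  funext m
  simp [proj, ext, m.2]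

lemma ext_proj (x : ℕ → R) : ∀ i < n, ext (proj n x) i = x i := by
  intro i hi
  simp [ext, proj, hi]

lemma hmul_congr {x x' y y' : ℕ → R} (hx : ∀ i < n, x i = x' i) (hy : ∀ i < n, y i = y' i) :
    proj n (hmul x y) = proj n (hmul x' y') := by
  funext m
  show (∑ h ∈ Finset.range (m.1 + 1), (m.1.choose h : R) * x h * y (m.1 - h)) = _
  refine Finset.sum_congr rfl fun h hh => ?_
  have h1 : h ≤ m.1 := Nat.lt_succ_iff.mp (Finset.mem_range.mp hh)
  rw [hx h (h1.trans_lt m.2), hy (m.1 - h) ((Nat.sub_le _ _).trans_lt m.2)]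

lemma tpow_succ (a : Fin n → R) (k : ℕ) : tpow a (k+1) = tmul a (tpow a k) :=
  Function.iterate_succ_apply' _ _ _

lemma tpow_proj (a : Fin n → R) (k : ℕ) : tpow a k = proj n (hpow (ext a) k) := by
  induction k with
  | zero => exact proj_hone.symm
  | succ k ih =>
    rw [tpow_succ, ih, tmul_eq, hpow_succ]
    exact hmul_congr (fun i _ => rfl) (ext_proj _)

lemma tmul_comm (a b : Fin n → R) : tmul a b = tmul b a := by
  rw [tmul_eq, tmul_eq, hmul_comm]

lemma tmul_assoc (a b c : Fin n → R) : tmul (tmul a b) c = tmul a (tmul b c) := by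
  rw [tmul_eq a b, tmul_eq b c, tmul_eq, tmul_eq,
    hmul_congr (ext_proj (hmul (ext a) (ext b))) (fun i _ => rfl),
    hmul_assoc,
    ← hmul_congr (n := n) (fun i _ => rfl) (ext_proj (hmul (ext b) (ext c)))]

lemma ext_tone (hn : 0 < n) : ext (tone : Fin n → R) = hone := by
  funext i
  unfold ext tone hone
  split
  · rfl
  · have : ¬ i = 0 := by omega
    rw [if_neg this]

lemma tone_tmul (hn : 0 < n) (a : Fin n → R) : tmul tone a = a := by
  rw [tmul_eq, ext_tone hn, hone_hmul, proj_ext]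

lemma tmul_tone (hn : 0 < n) (a : Fin n → R) : tmul a tone = a := by
  rw [tmul_comm, tone_tmul hn]

lemma ext_zero (hn : 0 < n) (a : Fin n → R) : ext a 0 = a ⟨0, hn⟩ := dif_pos hn

lemma tpow_zero_coeff (hn : 0 < n) (a : Fin n → R) (k : ℕ) :
    (tpow a k) ⟨0, hn⟩ = a ⟨0, hn⟩ ^ k := by
  rw [tpow_proj]
  show hpow (ext a) k 0 = _
  rw [hpow_zero_coeff, ext_zero hn]

lemma tpow_p {p : ℕ} [Fact p.Prime] {n : ℕ} (hn : 0 < n) (a : Fin n → ZMod p)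
    (ha : a ⟨0, hn⟩ = 1) : tpow a p = tone := by
  rw [tpow_proj, hpow_p p (ext a) (by rw [ext_zero hn, ha]), proj_hone]

/-! ### The group -/

abbrev U (p n : ℕ) (hn : 0 < n) : Type := {a : Fin n → ZMod p // a ⟨0, hn⟩ = 1}

variable {p : ℕ} [Fact p.Prime]

lemma tone_mem (hn : 0 < n) : (tone : Fin n → ZMod p) ⟨0, hn⟩ = 1 := by simp [tone]

instance instZeroU (p n : ℕ) [Fact p.Prime] (hn : 0 < n) : Zero (U p n hn) :=
  ⟨⟨tone, tone_mem hn⟩⟩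

instance instAddU (p n : ℕ) [Fact p.Prime] (hn : 0 < n) : Add (U p n hn) :=
  ⟨fun A B => ⟨tmul A.1 B.1, by
    have h1 : tmul A.1 B.1 = proj n (hmul (ext A.1) (ext B.1)) := tmul_eq _ _
    rw [h1]
    show hmul (ext A.1) (ext B.1) 0 = 1
    have h0 : ∀ x y : ℕ → ZMod p, hmul x y 0 = x 0 * y 0 := by
      intro x y; simp [hmul]
    rw [h0, ext_zero hn, ext_zero hn, A.2, B.2, one_mul]⟩⟩

instance instNegU (p n : ℕ) [Fact p.Prime] (hn : 0 < n) : Neg (U p n hn) :=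
  ⟨fun A => ⟨tpow A.1 (p - 1), by rw [tpow_zero_coeff hn, A.2, one_pow]⟩⟩

lemma add_val (hn : 0 < n) (A B : U p n hn) : (A + B).1 = tmul A.1 B.1 := rfl

lemma zero_val (hn : 0 < n) : (0 : U p n hn).1 = tone := rfl

instance instGroupU (p n : ℕ) [Fact p.Prime] (hn : 0 < n) : AddCommGroup (U p n hn) where
  add := (· + ·)
  zero := 0
  neg := Neg.neg
  nsmul := nsmulRec
  zsmul := zsmulRec
  add_assoc A B C := Subtype.ext (tmul_assoc A.1 B.1 C.1)
  zero_add A := Subtype.ext (tone_tmul hn A.1)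
  add_zero A := Subtype.ext (tmul_tone hn A.1)
  add_comm A B := Subtype.ext (tmul_comm A.1 B.1)
  neg_add_cancel A := Subtype.ext (by
    show tmul (tpow A.1 (p - 1)) A.1 = tone
    rw [tmul_comm, ← tpow_succ]
    have hp : p - 1 + 1 = p := Nat.succ_pred_eq_of_pos (Fact.out : p.Prime).pos
    rw [hp]
    exact tpow_p hn A.1 A.2)

lemma nsmul_val (hn : 0 < n) (A : U p n hn) (m : ℕ) : (m • A).1 = tpow A.1 m := by
  induction m with
  | zero => rw [zero_nsmul]; rfl
  | succ m ih =>
    rw [succ_nsmul, add_val, ih, tmul_comm, ← tpow_succ]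

instance instModU (p n : ℕ) [Fact p.Prime] (hn : 0 < n) : Module (ZMod p) (U p n hn) :=
  AddCommGroup.zmodModule (fun A => Subtype.ext (by
    rw [nsmul_val hn, zero_val hn]
    exact tpow_p hn A.1 A.2))

instance instFintypeU (p n : ℕ) [Fact p.Prime] (hn : 0 < n) : Fintype (U p n hn) :=
  Subtype.fintype _

/-- Forgetting the first coordinate is a bijection. -/
def coordEquiv (p n : ℕ) [Fact p.Prime] (hn : 0 < n) : U p n hn ≃ (Fin (n-1) → ZMod p) where
  toFun A i := A.1 ⟨i.1 + 1, by have := i.2; omega⟩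
  invFun v := ⟨fun j => if h : j.1 = 0 then 1 else v ⟨j.1 - 1, by have := j.2; omega⟩, by simp⟩
  left_inv A := by
    apply Subtype.ext
    funext j
    by_cases h : j.1 = 0
    · have : j = ⟨0, hn⟩ := Fin.ext h
      rw [this]
      simp [A.2]
    · simp only [dif_neg h]
      refine congrArg A.1 (Fin.ext ?_)
      show j.1 - 1 + 1 = j.1
      omega
  right_inv v := by
    funext i
    simp only []
    rw [dif_neg (by omega)]
    refine congrArg v (Fin.ext ?_)
    show i.1 + 1 - 1 = i.1
    omega

lemma card_U (p n : ℕ) [Fact p.Prime] (hn : 0 < n) :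
    Fintype.card (U p n hn) = p ^ (n - 1) := by
  rw [Fintype.card_congr (coordEquiv p n hn)]
  simp [ZMod.card]

end TH

theorem truncated_hurwitz_group_zmod_p (p n : ℕ) [Fact p.Prime] (hn : 0 < n) :
    (∀ a : Fin n → ZMod p, a ⟨0, hn⟩ = 1 → a ≠ tone →
      tpow a p = tone ∧ ∀ m : ℕ, 0 < m → m < p → tpow a m ≠ tone) ∧
    Nat.card {a : Fin n → ZMod p // a ⟨0, hn⟩ = 1} = p ^ (n - 1) ∧
    ∃ φ : {a : Fin n → ZMod p // a ⟨0, hn⟩ = 1} ≃ (Fin (n - 1) → ZMod p),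
      ∀ a b c : {a : Fin n → ZMod p // a ⟨0, hn⟩ = 1},
        c.1 = tmul a.1 b.1 → φ c = φ a + φ b := by
  have hp : p.Prime := Fact.out
  refine ⟨?_, ?_, ?_⟩
  · intro a ha hne
    refine ⟨TH.tpow_p hn a ha, ?_⟩
    intro m hm hmp hEq
    set A : TH.U p n hn := ⟨a, ha⟩ with hA
    have hA0 : A ≠ 0 := by
      intro h
      exact hne ((congrArg Subtype.val h).trans (TH.zero_val hn))
    have hpA : p • A = 0 := Subtype.ext (by
      rw [TH.nsmul_val hn, TH.zero_val hn]; exact TH.tpow_p hn a ha)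
    have hmA : m • A = 0 := Subtype.ext (by
      rw [TH.nsmul_val hn, TH.zero_val hn]; exact hEq)
    have h1 : addOrderOf A ∣ p := addOrderOf_dvd_of_nsmul_eq_zero hpA
    have h2 : addOrderOf A ∣ m := addOrderOf_dvd_of_nsmul_eq_zero hmA
    rcases (Nat.Prime.eq_one_or_self_of_dvd hp _ h1) with h | h
    · exact hA0 (AddMonoid.addOrderOf_eq_one_iff.mp h)
    · rw [h] at h2
      have := Nat.le_of_dvd hm h2
      omega
  · rw [Nat.card_eq_fintype_card, TH.card_U p n hn]
  · haveI : Module.Finite (ZMod p) (TH.U p n hn) := Module.Finite.of_finite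
    have hfr : Module.finrank (ZMod p) (TH.U p n hn) = n - 1 := by
      have h1 := Module.card_eq_pow_finrank (K := ZMod p) (V := TH.U p n hn)
      rw [ZMod.card, TH.card_U p n hn] at h1
      exact (Nat.pow_right_injective hp.two_le h1.symm)
    have hfr2 : Module.finrank (ZMod p) (Fin (n-1) → ZMod p) = n - 1 := by
      rw [Module.finrank_fintype_fun_eq_card, Fintype.card_fin]
    have e : TH.U p n hn ≃ₗ[ZMod p] (Fin (n-1) → ZMod p) :=
      LinearEquiv.ofFinrankEq _ _ (by rw [hfr, hfr2])
    refine ⟨e.toEquiv, ?_⟩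
    intro a b c hc
    have hcab : c = a + b := Subtype.ext (by rw [hc]; exact (TH.add_val hn a b).symm)
    rw [hcab]
    exact e.map_add a b
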